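/- Let Z = [z̲*, z̄*] ⊂ ℝ^{n_z} be a closed box and f : Z → ℝ^p differentiable with J̲_{ij} ≤ (J^f(z))_{ij} ≤ J̄_{ij} on Z. Let H ∈ ℝ^{p×n_z} with H_{ij} ∈ {J̲_{ij}, J̄_{ij}} for each (i,j), set μ(z) := f(z) − Hz, and for each i define D^i := diag over j of the indicator that H_{ij} = J̲_{ij} (equivalently, that (J̄ − H)_{ij} > 0, the coordinates on which μ_i is nondecreasing), and μ_{d,i}(z₁,z₂) := μ_i(D^i z₁ + (I − D^i) z₂). Define F̄_μ := 2·max(J̄ − H, 0) − J̲ + H (entrywise maximum with the zero matrix). Then for any z̲ ≤ z̄ with z̲, z̄ ∈ Z and ε := z̄ − z̲, it holds that μ_d(z̄,z̲) − μ_d(z̲,z̄) ≤ F̄_μ·ε. -/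

import Mathlib

open Matrix

/-- Bound on the width of the tight decomposition function of the
JSS remainder `μ(z) = f(z) − Hz`. -/
theorem jss_remainder_width_bound {nz p : ℕ}
    (zls zus : Fin nz → ℝ) (hbox : zls ≤ zus)
    (f : (Fin nz → ℝ) → (Fin p → ℝ))
    (Jf : (Fin nz → ℝ) → ((Fin nz → ℝ) →L[ℝ] (Fin p → ℝ)))
    (hdiff : ∀ z ∈ Set.Icc zls zus, HasFDerivWithinAt f (Jf z) (Set.Icc zls zus) z)
    (Jl Ju H : Matrix (Fin p) (Fin nz) ℝ)
    (hJ : ∀ z ∈ Set.Icc zls zus, ∀ (i : Fin p) (j : Fin nz),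
      Jl i j ≤ Jf z (Pi.single j 1) i ∧ Jf z (Pi.single j 1) i ≤ Ju i j)
    (hH : ∀ i j, H i j = Jl i j ∨ H i j = Ju i j)
    (μ : (Fin nz → ℝ) → (Fin p → ℝ))
    (hμ : ∀ z, μ z = f z - H.mulVec z)
    (μd : (Fin nz → ℝ) → (Fin nz → ℝ) → (Fin p → ℝ))
    (hμd : ∀ z₁ z₂ (i : Fin p),
      μd z₁ z₂ i = μ (fun j => if H i j = Jl i j then z₁ j else z₂ j) i)
    (Fμ : Matrix (Fin p) (Fin nz) ℝ)
    (hFμ : ∀ i j, Fμ i j = 2 * max (Ju i j - H i j) 0 - Jl i j + H i j) :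
    ∀ zl zu, zl ∈ Set.Icc zls zus → zu ∈ Set.Icc zls zus → zl ≤ zu →
      μd zu zl - μd zl zu ≤ Fμ.mulVec (zu - zl) := by

  intro zl zu hzl hzu hle
  have hconv : Convex ℝ (Set.Icc zls zus) := convex_Icc _ _
  intro i
  set a : Fin nz → ℝ := fun j => if H i j = Jl i j then zu j else zl j with ha_def
  set b : Fin nz → ℝ := fun j => if H i j = Jl i j then zl j else zu j with hb_def
  have ha : a ∈ Set.Icc zls zus := by
    constructor <;> intro j <;> simp only [ha_def] <;> split
    · exact hzu.1 j
    · exact hzl.1 j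
    · exact hzu.2 j
    · exact hzl.2 j
  have hb : b ∈ Set.Icc zls zus := by
    constructor <;> intro j <;> simp only [hb_def] <;> split
    · exact hzl.1 j
    · exact hzu.1 j
    · exact hzl.2 j
    · exact hzu.2 j
  set C : ℝ := (H.mulVec (a - b)) i + (Fμ.mulVec (zu - zl)) i with hC
  -- key derivative bound
  have key : ∀ z ∈ Set.Icc zls zus, Jf z (a - b) i ≤ C := by
    intro z hz
    have hexp : (a - b) = ∑ j, (a j - b j) • (Pi.single j 1 : Fin nz → ℝ) := by
      funext k
      rw [Finset.sum_apply]
      simp [Pi.single_apply, Finset.sum_ite_eq', mul_comm]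
    have hJv : Jf z (a - b) i = ∑ j, (a j - b j) * Jf z (Pi.single j 1) i := by
      rw [hexp, map_sum, Finset.sum_apply]
      simp [smul_eq_mul]
    rw [hJv, hC]
    simp only [Matrix.mulVec, dotProduct, Pi.sub_apply]
    rw [← Finset.sum_add_distrib]
    apply Finset.sum_le_sum
    intro j _
    have hJz := hJ z hz i j
    have hJJ := hJ zls ⟨le_refl _, hbox⟩ i j
    have hJlu : Jl i j ≤ Ju i j := le_trans hJJ.1 hJJ.2
    have hεj : 0 ≤ zu j - zl j := sub_nonneg.2 (hle j)
    have hF := hFμ i j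
    by_cases hcase : H i j = Jl i j
    · have hab : a j - b j = zu j - zl j := by
        simp only [ha_def, hb_def, if_pos hcase]
      have hmax : max (Ju i j - H i j) 0 = Ju i j - H i j := by
        rw [max_eq_left]; rw [hcase]; linarith
      rw [hab]
      rw [hmax] at hF
      nlinarith [hJz.1, hJz.2, hεj]
    · have hHu : H i j = Ju i j := (hH i j).resolve_left hcase
      have hab : a j - b j = -(zu j - zl j) := by
        simp only [ha_def, hb_def, if_neg hcase]; ring
      have hmax : max (Ju i j - H i j) 0 = 0 := by
        rw [max_eq_right]; rw [hHu]; linarith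
      rw [hab]
      rw [hmax] at hF
      nlinarith [hJz.1, hJz.2, hεj]
  -- the path
  set γ : ℝ → (Fin nz → ℝ) := fun t => b + t • (a - b) with hγ
  have hγ0 : γ 0 = b := by simp [hγ]
  have hγ1 : γ 1 = a := by simp [hγ]
  have hmaps : Set.MapsTo γ (Set.Icc (0:ℝ) 1) (Set.Icc zls zus) := by
    intro t ht
    have hmem := hconv hb ha (by linarith [ht.2] : (0:ℝ) ≤ 1 - t) ht.1 (by ring)
    have : γ t = (1 - t) • b + t • a := by
      funext k
      simp [hγ, Pi.add_apply, Pi.smul_apply, smul_eq_mul]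
      ring
    rw [this]
    exact hmem
  set φ : ℝ → ℝ := fun t => f (γ t) i with hφ_def
  have hφ : ∀ t ∈ Set.Icc (0:ℝ) 1,
      HasDerivWithinAt φ (Jf (γ t) (a - b) i) (Set.Icc 0 1) t := by
    intro t ht
    have hγd : HasDerivWithinAt γ (a - b) (Set.Icc 0 1) t := by
      have h1 : HasDerivAt (fun s : ℝ => s • (a - b)) ((1:ℝ) • (a - b)) t :=
        (hasDerivAt_id t).smul_const (a - b)
      have h2 : HasDerivAt γ ((1:ℝ) • (a - b)) t := h1.const_add b
      simpa using h2.hasDerivWithinAt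
    have hfγ : HasDerivWithinAt (fun t => f (γ t)) (Jf (γ t) (a - b)) (Set.Icc 0 1) t :=
      (hdiff (γ t) (hmaps ht)).comp_hasDerivWithinAt t hγd hmaps
    have hp := ((ContinuousLinearMap.proj i :
        (Fin p → ℝ) →L[ℝ] ℝ).hasFDerivAt).comp_hasDerivWithinAt t hfγ
    exact hp
  have hcont : ContinuousOn φ (Set.Icc (0:ℝ) 1) :=
    fun t ht => (hφ t ht).continuousWithinAt
  have hdiff' : DifferentiableOn ℝ φ (interior (Set.Icc (0:ℝ) 1)) := by
    intro t ht
    rw [interior_Icc] at ht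
    exact ((hφ t (Set.Ioo_subset_Icc_self ht)).hasDerivAt
      (Icc_mem_nhds ht.1 ht.2)).differentiableAt.differentiableWithinAt
  have hbound : ∀ t ∈ interior (Set.Icc (0:ℝ) 1), deriv φ t ≤ C := by
    intro t ht
    rw [interior_Icc] at ht
    have hmem : Set.Icc (0:ℝ) 1 ∈ nhds t := Icc_mem_nhds ht.1 ht.2
    have hd : HasDerivAt φ (Jf (γ t) (a - b) i) t :=
      (hφ t (Set.Ioo_subset_Icc_self ht)).hasDerivAt hmem
    rw [hd.deriv]
    exact key (γ t) (hmaps (Set.Ioo_subset_Icc_self ht))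
  have hmvt := (convex_Icc (0:ℝ) 1).image_sub_le_mul_sub_of_deriv_le hcont hdiff'
    hbound 0 (Set.left_mem_Icc.2 zero_le_one) 1 (Set.right_mem_Icc.2 zero_le_one)
    zero_le_one
  have hfab : f a i - f b i ≤ C := by
    have : φ 1 - φ 0 ≤ C * (1 - 0) := hmvt
    rw [hφ_def] at this
    simp only [hγ0, hγ1] at this
    linarith
  have hA : μd zu zl i = f a i - (H.mulVec a) i := by
    rw [hμd, hμ]; rfl
  have hB : μd zl zu i = f b i - (H.mulVec b) i := by
    rw [hμd, hμ]; rfl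
  have hHab : (H.mulVec (a - b)) i = (H.mulVec a) i - (H.mulVec b) i := by
    rw [Matrix.mulVec_sub]; rfl
  have goal_eq : (μd zu zl - μd zl zu) i = f a i - f b i - (H.mulVec (a - b)) i := by
    rw [Pi.sub_apply, hA, hB, hHab]; ring
  rw [goal_eq]
  rw [hC] at hfab
  linarith
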